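/- Let X be an Archimedean vector lattice admitting a positively homogeneous continuous function calculus Φ, and let Y be a sublattice of X (a linear subspace closed under finite suprema and infima). Then Y admits a positively homogeneous continuous function calculus (with values in Y) if and only if Φ_y(ℋ_m) ⊆ Y for every m ∈ ℕ and every y = (y_1,…,y_m) ∈ Y^m. -/

import Mathlib

/-- A function `h : ℝ^m → ℝ` belongs to `ℋ_m` iff it is continuous and positively
homogeneous. -/
def IsPHC {m : ℕ} (h : (Fin m → ℝ) → ℝ) : Prop :=
  Continuous h ∧ ∀ (c : ℝ), 0 ≤ c → ∀ t : Fin m → ℝ, h (c • t) = c * h t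

lemma IsPHC.add {m} {h g : (Fin m → ℝ) → ℝ} (hh : IsPHC h) (hg : IsPHC g) : IsPHC (h + g) :=
  ⟨hh.1.add hg.1, fun c hc t => by simp [Pi.add_apply, hh.2 c hc t, hg.2 c hc t, mul_add]⟩

lemma IsPHC.smul {m} (c : ℝ) {h : (Fin m → ℝ) → ℝ} (hh : IsPHC h) : IsPHC (c • h) :=
  ⟨hh.1.const_smul c, fun a ha t => by simp [Pi.smul_apply, hh.2 a ha t]; ring⟩

lemma IsPHC.sup {m} {h g : (Fin m → ℝ) → ℝ} (hh : IsPHC h) (hg : IsPHC g) : IsPHC (h ⊔ g) :=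
  ⟨hh.1.max hg.1, fun c hc t => by
    simp only [Pi.sup_apply, hh.2 c hc t, hg.2 c hc t]
    rw [mul_max_of_nonneg _ _ hc]⟩

lemma IsPHC.zero {m} : IsPHC (0 : (Fin m → ℝ) → ℝ) := by
  simpa using (IsPHC.smul (m := m) 0 ⟨continuous_const (y := (0:ℝ)), fun c hc t => by simp⟩)

lemma IsPHC.proj {m} (k : Fin m) : IsPHC (fun t : Fin m → ℝ => t k) :=
  ⟨continuous_apply k, fun c hc t => by simp⟩

lemma IsPHC.zero_eq {m} {h : (Fin m → ℝ) → ℝ} (hh : IsPHC h) : h 0 = 0 := by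
  have := hh.2 0 le_rfl 0
  simpa using this

inductive Gen (m : ℕ) : ((Fin m → ℝ) → ℝ) → Prop
  | zero : Gen m 0
  | proj (k : Fin m) : Gen m (fun t => t k)
  | add {f g} : Gen m f → Gen m g → Gen m (f + g)
  | smul (c : ℝ) {f} : Gen m f → Gen m (c • f)
  | sup {f g} : Gen m f → Gen m g → Gen m (f ⊔ g)

lemma Gen.inf {m f g} (hf : Gen m f) (hg : Gen m g) : Gen m (f ⊓ g) := by
  have : f ⊓ g = (-1 : ℝ) • (((-1 : ℝ) • f) ⊔ ((-1 : ℝ) • g)) := by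
    simp [neg_one_smul, neg_sup]
  rw [this]
  exact Gen.smul _ (Gen.sup (Gen.smul _ hf) (Gen.smul _ hg))

lemma Gen.sub {m f g} (hf : Gen m f) (hg : Gen m g) : Gen m (f - g) := by
  have : f - g = f + (-1 : ℝ) • g := by simp [sub_eq_add_neg]
  rw [this]; exact Gen.add hf (Gen.smul _ hg)

-- the ℓ¹ norm function
noncomputable def Nf (m : ℕ) : (Fin m → ℝ) → ℝ := fun t => ∑ k, |t k|

lemma Nf_isPHC (m : ℕ) : IsPHC (Nf m) := by
  constructor
  · exact continuous_finset_sum _ fun k _ => (continuous_apply k).abs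
  · intro c hc t
    simp only [Nf, Pi.smul_apply, smul_eq_mul, abs_mul, abs_of_nonneg hc, Finset.mul_sum]

lemma Gen.nf (m : ℕ) : Gen m (Nf m) := by
  have : Nf m = ∑ k : Fin m, ((fun t : Fin m → ℝ => t k) ⊔ ((-1 : ℝ) • fun t : Fin m → ℝ => t k)) := by
    funext t
    simp only [Nf, Finset.sum_apply, Pi.sup_apply, Pi.smul_apply, smul_eq_mul,
      neg_one_mul, abs_eq_max_neg]
  rw [this]
  refine Finset.sum_induction _ _ (fun a b => Gen.add) Gen.zero ?_
  intro k _
  exact Gen.sup (Gen.proj k) (Gen.smul _ (Gen.proj k))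

lemma Nf_nonneg {m} (t : Fin m → ℝ) : 0 ≤ Nf m t :=
  Finset.sum_nonneg fun k _ => abs_nonneg _

lemma Nf_pos {m} {t : Fin m → ℝ} (ht : t ≠ 0) : 0 < Nf m t := by
  rcases (Nf_nonneg t).lt_or_eq with h | h
  · exact h
  · exfalso; apply ht; funext k
    have := (Finset.sum_eq_zero_iff_of_nonneg (fun k _ => abs_nonneg (t k))).mp h.symm
    simpa using abs_eq_zero.mp (this k (Finset.mem_univ k))

lemma Gen.isPHC {m f} (hf : Gen m f) : IsPHC f := by
  induction hf with
  | zero => exact IsPHC.zero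
  | proj k => exact IsPHC.proj k
  | add _ _ ih1 ih2 => exact ih1.add ih2
  | smul c _ ih => exact ih.smul c
  | sup _ _ ih1 ih2 => exact ih1.sup ih2

open ContinuousMap in
/-- Key approximation lemma: every PHC function is approximated by lattice
combinations of coordinates, with error controlled by the ℓ¹ norm. -/
lemma phc_approx {m : ℕ} {h : (Fin m → ℝ) → ℝ} (hh : IsPHC h) {ε : ℝ} (hε : 0 < ε) :
    ∃ g, Gen m g ∧ ∀ t, |h t - g t| ≤ ε * Nf m t := by
  classical
  -- the unit "sphere" for the ℓ¹ norm
  set K : Set (Fin m → ℝ) := {t | Nf m t = 1} with hK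
  have hNcont : Continuous (Nf m) := (Nf_isPHC m).1
  have hKclosed : IsClosed K := isClosed_eq hNcont continuous_const
  have hKcomp : IsCompact K := by
    refine Metric.isCompact_of_isClosed_isBounded hKclosed ?_
    refine (Metric.isBounded_closedBall (x := (0 : Fin m → ℝ)) (r := 1)).subset ?_
    intro t ht
    simp only [Metric.mem_closedBall, dist_zero_right]
    refine pi_norm_le_iff_of_nonneg zero_le_one |>.mpr fun k => ?_
    calc ‖t k‖ = |t k| := rfl
      _ ≤ Nf m t := Finset.single_le_sum (fun i _ => abs_nonneg (t i)) (Finset.mem_univ k)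
      _ = 1 := ht
  haveI : CompactSpace K := isCompact_iff_compactSpace.mp hKcomp
  -- the sublattice of restrictions of generated functions
  set L : Set C(K, ℝ) := {f | ∃ g, Gen m g ∧ ∀ z : K, f z = g z} with hL
  have hrestrict : ∀ (g : (Fin m → ℝ) → ℝ) (hg : Gen m g),
      (⟨fun z : K => g z, hg.isPHC.1.comp continuous_subtype_val⟩ : C(K, ℝ)) ∈ L :=
    fun g hg => ⟨g, hg, fun z => rfl⟩
  have nA : L.Nonempty := ⟨_, hrestrict 0 Gen.zero⟩
  have inf_mem : ∀ f ∈ L, ∀ g ∈ L, f ⊓ g ∈ L := by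
    rintro f ⟨gf, hgf, hf⟩ g ⟨gg, hgg, hg⟩
    exact ⟨gf ⊓ gg, hgf.inf hgg, fun z => by simp [hf z, hg z]⟩
  have sup_mem : ∀ f ∈ L, ∀ g ∈ L, f ⊔ g ∈ L := by
    rintro f ⟨gf, hgf, hf⟩ g ⟨gg, hgg, hg⟩
    exact ⟨gf ⊔ gg, hgf.sup hgg, fun z => by simp [hf z, hg z]⟩
  have sep : L.SeparatesPointsStrongly := by
    intro v x y
    by_cases hxy : x = y
    · subst hxy
      refine ⟨_, hrestrict (v x • Nf m) (Gen.smul _ (Gen.nf m)), ?_, ?_⟩ <;>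
        · show v x * Nf m x = v x
          rw [x.2, mul_one]
    · have hxy' : (x : Fin m → ℝ) ≠ (y : Fin m → ℝ) := fun e => hxy (Subtype.ext e)
      obtain ⟨k, hk⟩ := Function.ne_iff.mp hxy'
      set d : ℝ := (x : Fin m → ℝ) k - (y : Fin m → ℝ) k with hd
      have hd0 : d ≠ 0 := sub_ne_zero_of_ne hk
      set p : (Fin m → ℝ) → ℝ :=
        d⁻¹ • ((fun t => t k) - ((y : Fin m → ℝ) k) • Nf m) with hp
      set q : (Fin m → ℝ) → ℝ :=
        (-d)⁻¹ • ((fun t => t k) - ((x : Fin m → ℝ) k) • Nf m) with hq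
      have hgenp : Gen m p := Gen.smul _ ((Gen.proj k).sub (Gen.smul _ (Gen.nf m)))
      have hgenq : Gen m q := Gen.smul _ ((Gen.proj k).sub (Gen.smul _ (Gen.nf m)))
      set g : (Fin m → ℝ) → ℝ := v x • p + v y • q with hg
      have hx1 : Nf m (x : Fin m → ℝ) = 1 := x.2
      have hy1 : Nf m (y : Fin m → ℝ) = 1 := y.2
      refine ⟨_, hrestrict g (Gen.add (Gen.smul _ hgenp) (Gen.smul _ hgenq)), ?_, ?_⟩
      · show g (x : Fin m → ℝ) = v x
        rw [hg, hp, hq]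
        simp only [Pi.add_apply, Pi.smul_apply, Pi.sub_apply, smul_eq_mul, hx1]
        field_simp [sub_ne_zero_of_ne hk, sub_ne_zero_of_ne hk.symm]
        try ring
      · show g (y : Fin m → ℝ) = v y
        rw [hg, hp, hq]
        simp only [Pi.add_apply, Pi.smul_apply, Pi.sub_apply, smul_eq_mul, hy1]
        field_simp [sub_ne_zero_of_ne hk, sub_ne_zero_of_ne hk.symm]
        try ring
  have hclosure := ContinuousMap.sublattice_closure_eq_top L nA inf_mem sup_mem sep
  -- restrict h to K and approximate
  set hK' : C(K, ℝ) := ⟨fun z : K => h z, hh.1.comp continuous_subtype_val⟩ with hhK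
  have hmem : hK' ∈ closure L := by rw [hclosure]; trivial
  obtain ⟨f, hfL, hdist⟩ := Metric.mem_closure_iff.mp hmem ε hε
  obtain ⟨g, hgGen, hfg⟩ := hfL
  refine ⟨g, hgGen, fun t => ?_⟩
  have hclose : ∀ z : K, |h (z : Fin m → ℝ) - g (z : Fin m → ℝ)| < ε := by
    intro z
    have := (ContinuousMap.dist_lt_iff hε).mp hdist z
    rw [hfg z] at this
    simpa [hhK, Real.dist_eq] using this
  by_cases ht : t = 0
  · subst ht
    rw [hh.zero_eq, hgGen.isPHC.zero_eq]
    simp [Nf]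
  · have hc : 0 < Nf m t := Nf_pos ht
    set z : Fin m → ℝ := (Nf m t)⁻¹ • t with hz
    have hzK : z ∈ K := by
      show Nf m z = 1
      rw [hz, (Nf_isPHC m).2 _ (inv_nonneg.mpr hc.le) t, inv_mul_cancel₀ hc.ne']
    have ht' : t = Nf m t • z := by
      rw [hz, smul_inv_smul₀ hc.ne']
    have h1 : h t = Nf m t * h z := by
      conv_lhs => rw [ht']
      exact hh.2 _ hc.le z
    have h2 : g t = Nf m t * g z := by
      conv_lhs => rw [ht']
      exact hgGen.isPHC.2 _ hc.le z
    rw [h1, h2, ← mul_sub, abs_mul, abs_of_pos hc, mul_comm ε]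
    exact mul_le_mul_of_nonneg_left (hclose ⟨z, hzK⟩).le hc.le

section Unique
variable {X : Type*} [Lattice X] [AddCommGroup X] [Module ℝ X]
  [CovariantClass X X (· + ·) (· ≤ ·)] [PosSMulMono ℝ X]

lemma precalc_zero {m : ℕ} (T : ((Fin m → ℝ) → ℝ) → X)
    (hTsmul : ∀ (c : ℝ) h, IsPHC h → T (c • h) = c • T h) : T 0 = 0 := by
  have := hTsmul 0 0 IsPHC.zero
  simpa using this

lemma precalc_mono {m : ℕ} (T : ((Fin m → ℝ) → ℝ) → X)
    (hTsup : ∀ h g, IsPHC h → IsPHC g → T (h ⊔ g) = T h ⊔ T g)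
    {h g} (hh : IsPHC h) (hg : IsPHC g) (hle : h ≤ g) : T h ≤ T g := by
  have : g = h ⊔ g := (sup_eq_right.mpr hle).symm
  calc T h ≤ T h ⊔ T g := le_sup_left
    _ = T g := by rw [← hTsup _ _ hh hg, ← this]

/-- Any two "pre-calculi" agreeing on the coordinate projections agree on
all positively homogeneous continuous functions: one-sided version. -/
lemma calculus_le (harchX : ∀ x y : X, (∀ n : ℕ, n • x ≤ y) → x ≤ 0)
    {m : ℕ} (T S : ((Fin m → ℝ) → ℝ) → X)
    (hTadd : ∀ h g, IsPHC h → IsPHC g → T (h + g) = T h + T g)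
    (hTsmul : ∀ (c : ℝ) h, IsPHC h → T (c • h) = c • T h)
    (hTsup : ∀ h g, IsPHC h → IsPHC g → T (h ⊔ g) = T h ⊔ T g)
    (hSadd : ∀ h g, IsPHC h → IsPHC g → S (h + g) = S h + S g)
    (hSsmul : ∀ (c : ℝ) h, IsPHC h → S (c • h) = c • S h)
    (hSsup : ∀ h g, IsPHC h → IsPHC g → S (h ⊔ g) = S h ⊔ S g)
    (hproj : ∀ k, T (fun t => t k) = S (fun t => t k))
    {h} (hh : IsPHC h) : T h ≤ S h := by
  have T0 : T 0 = 0 := precalc_zero T hTsmul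
  have S0 : S 0 = 0 := precalc_zero S hSsmul
  -- T and S agree on generated functions
  have hGen : ∀ f, Gen m f → T f = S f := by
    intro f hf
    induction hf with
    | zero => rw [T0, S0]
    | proj k => exact hproj k
    | @add f g hf hg ih1 ih2 =>
        rw [hTadd _ _ hf.isPHC hg.isPHC, hSadd _ _ hf.isPHC hg.isPHC, ih1, ih2]
    | @smul c f hf ih => rw [hTsmul _ _ hf.isPHC, hSsmul _ _ hf.isPHC, ih]
    | @sup f g hf hg ih1 ih2 =>
        rw [hTsup _ _ hf.isPHC hg.isPHC, hSsup _ _ hf.isPHC hg.isPHC, ih1, ih2]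
  set D : X := T (Nf m) + S (Nf m) with hD
  have hTN : 0 ≤ T (Nf m) := by
    rw [← T0]
    exact precalc_mono T hTsup IsPHC.zero (Nf_isPHC m) fun t => Nf_nonneg t
  have hSN : 0 ≤ S (Nf m) := by
    rw [← S0]
    exact precalc_mono S hSsup IsPHC.zero (Nf_isPHC m) fun t => Nf_nonneg t
  have hD0 : 0 ≤ D := add_nonneg hTN hSN
  have key : ∀ ε : ℝ, 0 < ε → T h - S h ≤ ε • D := by
    intro ε hε
    obtain ⟨g, hgGen, hgapp⟩ := phc_approx hh hε
    have hgP : IsPHC g := hgGen.isPHC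
    have hle1 : h ≤ g + ε • Nf m := by
      intro t
      have := (abs_le.mp (hgapp t)).2
      simp only [Pi.add_apply, Pi.smul_apply, smul_eq_mul]
      linarith
    have hle2 : g ≤ h + ε • Nf m := by
      intro t
      have := (abs_le.mp (hgapp t)).1
      simp only [Pi.add_apply, Pi.smul_apply, smul_eq_mul]
      linarith
    have e1 : T h ≤ T g + ε • T (Nf m) := by
      calc T h ≤ T (g + ε • Nf m) :=
            precalc_mono T hTsup hh (hgP.add ((Nf_isPHC m).smul ε)) hle1
        _ = T g + ε • T (Nf m) := by
            rw [hTadd _ _ hgP ((Nf_isPHC m).smul ε), hTsmul _ _ (Nf_isPHC m)]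
    have e2 : S g ≤ S h + ε • S (Nf m) := by
      calc S g ≤ S (h + ε • Nf m) :=
            precalc_mono S hSsup hgP (hh.add ((Nf_isPHC m).smul ε)) hle2
        _ = S h + ε • S (Nf m) := by
            rw [hSadd _ _ hh ((Nf_isPHC m).smul ε), hSsmul _ _ (Nf_isPHC m)]
    calc T h - S h ≤ (T g + ε • T (Nf m)) - S h := sub_le_sub_right e1 _
      _ = (S g - S h) + ε • T (Nf m) := by rw [hGen g hgGen]; abel
      _ ≤ ε • S (Nf m) + ε • T (Nf m) :=
          add_le_add (sub_le_iff_le_add'.mpr e2) le_rfl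
      _ = ε • D := by rw [hD, smul_add]; abel
  have arch : ∀ n : ℕ, n • (T h - S h) ≤ D := by
    intro n
    cases n with
    | zero => simpa using hD0
    | succ n =>
        have hpos : (0 : ℝ) < ((n + 1 : ℕ) : ℝ) := by positivity
        have := key (((n + 1 : ℕ) : ℝ))⁻¹ (by positivity)
        have h2 := smul_le_smul_of_nonneg_left this hpos.le
        rw [smul_smul, mul_inv_cancel₀ hpos.ne', one_smul] at h2
        rwa [Nat.cast_smul_eq_nsmul] at h2
  have := harchX _ _ arch
  exact sub_nonpos.mp this

end Unique

/-- Let `X` be an Archimedean vector lattice admitting a positively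
homogeneous continuous function calculus `Φ`, and let `Y` be a sublattice of `X` (a linear
subspace closed under finite suprema and infima). Then `Y` admits a positively homogeneous
continuous function calculus with values in `Y` if and only if `Φ_y(ℋ_m) ⊆ Y` for every
`m ∈ ℕ` and every tuple `y ∈ Y^m`. -/
theorem sublattice_admits_calculus_iff_invariant
    {X : Type*}
    [Lattice X] [AddCommGroup X] [Module ℝ X]
    [CovariantClass X X (· + ·) (· ≤ ·)] [PosSMulMono ℝ X]
    (harchX : ∀ x y : X, (∀ n : ℕ, n • x ≤ y) → x ≤ 0)
    -- the positively homogeneous continuous function calculus on `X`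
    (Φ : ∀ m : ℕ, (Fin m → X) → ((Fin m → ℝ) → ℝ) → X)
    (hΦadd : ∀ (m) (x : Fin m → X) (h g), IsPHC h → IsPHC g →
      Φ m x (h + g) = Φ m x h + Φ m x g)
    (hΦsmul : ∀ (m) (x : Fin m → X) (c : ℝ) (h), IsPHC h → Φ m x (c • h) = c • Φ m x h)
    (hΦsup : ∀ (m) (x : Fin m → X) (h g), IsPHC h → IsPHC g →
      Φ m x (h ⊔ g) = Φ m x h ⊔ Φ m x g)
    (hΦproj : ∀ (m) (x : Fin m → X) (k : Fin m), Φ m x (fun t => t k) = x k)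
    -- the sublattice `Y`
    (Y : Submodule ℝ X)
    (hYsup : ∀ a b : X, a ∈ Y → b ∈ Y → a ⊔ b ∈ Y)
    (hYinf : ∀ a b : X, a ∈ Y → b ∈ Y → a ⊓ b ∈ Y) :
    (∃ Ψ : ∀ m : ℕ, (Fin m → Y) → ((Fin m → ℝ) → ℝ) → Y,
      (∀ (m) (y : Fin m → Y) (h g), IsPHC h → IsPHC g →
        (Ψ m y (h + g) : X) = (Ψ m y h : X) + (Ψ m y g : X)) ∧
      (∀ (m) (y : Fin m → Y) (c : ℝ) (h), IsPHC h →
        (Ψ m y (c • h) : X) = c • (Ψ m y h : X)) ∧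
      (∀ (m) (y : Fin m → Y) (h g), IsPHC h → IsPHC g →
        (Ψ m y (h ⊔ g) : X) = (Ψ m y h : X) ⊔ (Ψ m y g : X)) ∧
      (∀ (m) (y : Fin m → Y) (k : Fin m), (Ψ m y (fun t => t k) : X) = (y k : X))) ↔
    (∀ (m : ℕ) (y : Fin m → Y) (h : (Fin m → ℝ) → ℝ), IsPHC h →
      Φ m (fun k => (y k : X)) h ∈ Y) := by
  classical
  constructor
  · rintro ⟨Ψ, hadd, hsmul, hsup, hproj⟩ m y h hh
    have heq : Φ m (fun k => (y k : X)) h = (Ψ m y h : X) := by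
      refine le_antisymm ?_ ?_
      · exact calculus_le harchX (fun h => Φ m (fun k => (y k : X)) h)
          (fun h => (Ψ m y h : X))
          (fun h g hh hg => hΦadd m _ h g hh hg)
          (fun c h hh => hΦsmul m _ c h hh)
          (fun h g hh hg => hΦsup m _ h g hh hg)
          (fun h g hh hg => hadd m y h g hh hg)
          (fun c h hh => hsmul m y c h hh)
          (fun h g hh hg => hsup m y h g hh hg)
          (fun k => by beta_reduce; rw [hΦproj m _ k, hproj m y k]) hh
      · exact calculus_le harchX (fun h => (Ψ m y h : X))
          (fun h => Φ m (fun k => (y k : X)) h)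
          (fun h g hh hg => hadd m y h g hh hg)
          (fun c h hh => hsmul m y c h hh)
          (fun h g hh hg => hsup m y h g hh hg)
          (fun h g hh hg => hΦadd m _ h g hh hg)
          (fun c h hh => hΦsmul m _ c h hh)
          (fun h g hh hg => hΦsup m _ h g hh hg)
          (fun k => by beta_reduce; rw [hΦproj m _ k, hproj m y k]) hh
    rw [heq]
    exact (Ψ m y h).2
  · intro hinv
    refine ⟨fun m y h => if hh : IsPHC h then
        ⟨Φ m (fun k => (y k : X)) h, hinv m y h hh⟩ else 0, ?_, ?_, ?_, ?_⟩
    · intro m y h g hh hg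
      simp only [dif_pos (hh.add hg), dif_pos hh, dif_pos hg]
      exact hΦadd m _ h g hh hg
    · intro m y c h hh
      simp only [dif_pos (hh.smul c), dif_pos hh]
      exact hΦsmul m _ c h hh
    · intro m y h g hh hg
      simp only [dif_pos (hh.sup hg), dif_pos hh, dif_pos hg]
      exact hΦsup m _ h g hh hg
    · intro m y k
      simp only [dif_pos (IsPHC.proj (m := m) k)]
      exact hΦproj m _ k
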